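/- Let T > 0, let (Ω, F, (F_t)_{t∈[0,T]}, P) be a filtered probability space whose filtration satisfies the usual conditions (right-continuity and completeness). Let M = (M(t))_{t∈[0,T]} be a martingale with continuous sample paths, and let A = (A(t))_{t∈[0,T]} be a progressively measurable process with continuous, strictly positive sample paths such that ∫_0^T |A(s)M(s)| ds < ∞ almost surely. If ∫_0^T A(s)M(s) ds = 0 almost surely, then P(M(t) = 0 for all t ∈ [0,T]) = 1. -/

import Mathlib

open MeasureTheory Set Filter Topology

noncomputable def clampf (s u : ℝ) : ℝ := max 0 (min u s)

lemma clampf_mem_Icc {s : ℝ} (hs : 0 ≤ s) (u : ℝ) : clampf s u ∈ Icc 0 s :=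
  ⟨le_max_left _ _, max_le hs (min_le_right _ _)⟩

lemma clampf_eq_self {s u : ℝ} (h : u ∈ Icc 0 s) : clampf s u = u := by
  have h1 : min u s = u := min_eq_left h.2
  simp [clampf, h1, max_eq_right h.1]

lemma joint_meas_clamp {Ω : Type*} [m : MeasurableSpace Ω] {T s : ℝ} (hs0 : 0 ≤ s) (hsT : s ≤ T)
    (X : ℝ → Ω → ℝ) (hc : ∀ ω, ContinuousOn (fun t => X t ω) (Icc 0 T))
    (hX : ∀ u ∈ Icc (0:ℝ) s, Measurable (X u)) :
    Measurable fun p : ℝ × Ω => X (clampf s p.1) p.2 := by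
  have hIccsub : Icc (0:ℝ) s ⊆ Icc 0 T := Icc_subset_Icc le_rfl hsT
  set d : ℕ → ℝ → ℝ := fun n u => min s ((⌈clampf s u * 2 ^ n⌉₊ : ℝ) / 2 ^ n) with hd
  have hd_mem : ∀ n u, d n u ∈ Icc (clampf s u) s := by
    intro n u
    refine ⟨le_min (clampf_mem_Icc hs0 u).2 ?_, min_le_left _ _⟩
    rw [le_div_iff₀ (by positivity)]
    exact Nat.le_ceil _
  have hd_le : ∀ n u, d n u ≤ clampf s u + ((2:ℝ) ^ n)⁻¹ := by
    intro n u
    refine le_trans (min_le_right _ _) ?_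
    rw [div_le_iff₀ (by positivity)]
    have h0 : (0:ℝ) ≤ clampf s u * 2 ^ n := by
      have := (clampf_mem_Icc hs0 u).1; positivity
    calc (⌈clampf s u * 2 ^ n⌉₊ : ℝ) ≤ clampf s u * 2 ^ n + 1 := le_of_lt (Nat.ceil_lt_add_one h0)
    _ = (clampf s u + (2 ^ n)⁻¹) * 2 ^ n := by field_simp
  have hd_tendsto : ∀ u, Tendsto (fun n => d n u) atTop (𝓝 (clampf s u)) := by
    intro u
    have h1 : Tendsto (fun n : ℕ => clampf s u + ((2:ℝ) ^ n)⁻¹) atTop (𝓝 (clampf s u + 0)) := by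
      refine Tendsto.const_add _ ?_
      exact tendsto_inv_atTop_zero.comp (tendsto_pow_atTop_atTop_of_one_lt one_lt_two)
    rw [add_zero] at h1
    exact tendsto_of_tendsto_of_tendsto_of_le_of_le tendsto_const_nhds h1
      (fun n => (hd_mem n u).1) (fun n => hd_le n u)
  have hmeas : ∀ n, Measurable fun p : ℝ × Ω => X (d n p.1) p.2 := by
    intro n
    have hceil : Measurable fun x : ℝ => ⌈x⌉₊ := Nat.ceil_mono.measurable
    have hcl : Measurable fun u : ℝ => clampf s u := by
      have : Continuous fun u : ℝ => max 0 (min u s) :=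
        continuous_const.max (continuous_id.min continuous_const)
      exact this.measurable
    have h1 : Measurable fun p : ℝ × Ω => ((p.2, ⌈clampf s p.1 * 2 ^ n⌉₊) : Ω × ℕ) := by
      refine Measurable.prodMk measurable_snd ?_
      exact (hceil.comp ((hcl.comp measurable_fst).mul_const _))
    have h2 : Measurable fun q : Ω × ℕ => X (min s ((q.2 : ℝ) / 2 ^ n)) q.1 := by
      refine measurable_from_prod_countable_left fun k => ?_
      exact hX (min s ((k:ℝ)/2^n)) ⟨le_min hs0 (by positivity), min_le_left _ _⟩
    exact h2.comp h1
  apply measurable_of_tendsto_metrizable hmeas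
  rw [tendsto_pi_nhds]
  intro p
  have hclmem : clampf s p.1 ∈ Icc 0 T := hIccsub (clampf_mem_Icc hs0 p.1)
  have hcw : ContinuousWithinAt (fun t => X t p.2) (Icc 0 T) (clampf s p.1) :=
    hc p.2 _ hclmem
  refine hcw.tendsto.comp ?_
  refine tendsto_nhdsWithin_of_tendsto_nhds_of_eventually_within _ (hd_tendsto p.1) ?_
  exact Eventually.of_forall fun n => hIccsub ⟨le_trans (clampf_mem_Icc hs0 p.1).1 (hd_mem n p.1).1, (hd_mem n p.1).2⟩

lemma eq_zero_of_ae_zero_of_continuousOn {T : ℝ} (hT : 0 < T) {h : ℝ → ℝ}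
    (hc : ContinuousOn h (Icc 0 T))
    (hz : ∀ᵐ s ∂(volume.restrict (Icc (0:ℝ) T)), h s = 0) :
    ∀ t ∈ Icc (0:ℝ) T, h t = 0 := by
  intro t ht
  set Z := {s : ℝ | s ∈ Icc 0 T ∧ h s = 0} with hZ
  have hN : volume.restrict (Icc (0:ℝ) T) {s : ℝ | ¬ h s = 0} = 0 := hz
  have hZc : t ∈ closure Z := by
    rw [Metric.mem_closure_iff]
    intro ε hε
    set a := max 0 (t - ε/2) with ha
    set b := min T (t + ε/2) with hb
    have hab : a < b := by
      rcases ht with ⟨ht0, htT⟩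
      rw [ha, hb]
      rcases lt_or_ge t T with hlt | hge
      · apply max_lt <;> apply lt_min
        · exact hT
        · linarith
        · linarith
        · linarith
      · have htT' : t = T := le_antisymm htT hge
        apply max_lt <;> [skip; skip] <;> [apply lt_min; apply lt_min] <;> linarith
    have hsub : Ioo a b ⊆ Icc 0 T := fun x hx =>
      ⟨le_trans (le_max_left _ _) (le_of_lt hx.1), le_trans (le_of_lt hx.2) (min_le_left _ _)⟩
    by_contra hno
    push_neg at hno
    have hIoosub : Ioo a b ⊆ {s : ℝ | ¬ h s = 0} := by
      intro x hx
      intro hx0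
      have hxZ : x ∈ Z := ⟨hsub hx, hx0⟩
      have h1 : t - ε/2 ≤ a := le_max_right _ _
      have h2 : b ≤ t + ε/2 := min_le_right _ _
      have h3 : |t - x| < ε := by
        rw [abs_lt]; constructor <;> [linarith [hx.2]; linarith [hx.1]]
      have h4 := hno x hxZ
      rw [Real.dist_eq] at h4
      linarith [h3, h4]
    have hle : volume.restrict (Icc (0:ℝ) T) (Ioo a b) ≤ 0 := by
      rw [← hN]
      exact measure_mono hIoosub
    have : volume.restrict (Icc (0:ℝ) T) (Ioo a b) = volume (Ioo a b) := by
      rw [Measure.restrict_apply measurableSet_Ioo]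
      congr 1
      rw [inter_eq_left.mpr hsub]
    rw [this] at hle
    rw [Real.volume_Ioo] at hle
    have hpos : (0:ℝ) < b - a := by linarith
    have := (ENNReal.ofReal_pos.mpr hpos).trans_le hle
    exact absurd this (by simp)
  rcases mem_closure_iff_seq_limit.mp hZc with ⟨u, hu, hut⟩
  have h1 : Tendsto (fun n => h (u n)) atTop (𝓝 (h t)) := by
    refine (hc t ht).tendsto.comp ?_
    exact tendsto_nhdsWithin_of_tendsto_nhds_of_eventually_within _ hut
      (Eventually.of_forall fun n => (hu n).1)
  have h2 : Tendsto (fun n => h (u n)) atTop (𝓝 0) := by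
    have : (fun n => h (u n)) = fun _ => (0:ℝ) := funext fun n => (hu n).2
    rw [this]; exact tendsto_const_nhds
  exact tendsto_nhds_unique h1 h2

/-- If `M` is a continuous martingale on `[0,T]` and `A` is a progressively measurable
process with continuous, strictly positive sample paths such that
`∫_0^T |A(s)M(s)| ds < ∞` a.s. and `∫_0^T A(s)M(s) ds = 0` a.s., then
`P(M(t) = 0 for all t ∈ [0,T]) = 1`. -/
theorem martingale_eq_zero_of_weighted_integral_eq_zero
    {Ω : Type*} {m0 : MeasurableSpace Ω} {μ : Measure Ω} [IsProbabilityMeasure μ]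
    (T : ℝ) (hT : 0 < T)
    (ℱ : Filtration ℝ m0)
    -- usual conditions: right-continuity and completeness of the filtration
    (h_right : ∀ t : ℝ, ℱ t = ⨅ u : {u : ℝ // t < u}, ℱ (u : ℝ))
    (h_complete : ∀ s : Set Ω, μ s = 0 → MeasurableSet[ℱ 0] s)
    (M A : ℝ → Ω → ℝ)
    -- M is a martingale on [0,T] with continuous sample paths
    (hM_adapted : Adapted ℱ M)
    (hM_int : ∀ t ∈ Icc (0 : ℝ) T, Integrable (M t) μ)
    (hM_mart : ∀ s t : ℝ, 0 ≤ s → s ≤ t → t ≤ T → μ[M t | ℱ s] =ᵐ[μ] M s)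
    (hM_cont : ∀ ω, ContinuousOn (fun t => M t ω) (Icc 0 T))
    -- A is progressively measurable with continuous, strictly positive sample paths
    (hA_prog : ProgMeasurable ℱ A)
    (hA_cont : ∀ ω, ContinuousOn (fun t => A t ω) (Icc 0 T))
    (hA_pos : ∀ ω, ∀ t ∈ Icc (0 : ℝ) T, 0 < A t ω)
    -- integrability of A·M on [0,T], a.s.
    (h_int : ∀ᵐ ω ∂μ, IntegrableOn (fun s => A s ω * M s ω) (Icc 0 T))
    -- the weighted integral vanishes a.s.
    (h_zero : ∀ᵐ ω ∂μ, ∫ s in (0 : ℝ)..T, A s ω * M s ω = 0) :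
    ∀ᵐ ω ∂μ, ∀ t ∈ Icc (0 : ℝ) T, M t ω = 0 := by
  classical
  have hT0 : (0:ℝ) ≤ T := le_of_lt hT
  set ν : Measure ℝ := volume.restrict (Icc (0:ℝ) T) with hνdef
  haveI hνfin : IsFiniteMeasure ν := by
    constructor
    rw [hνdef, Measure.restrict_apply_univ, Real.volume_Icc]
    exact ENNReal.ofReal_lt_top
  -- the integrand process
  set f : ℝ → Ω → ℝ := fun s ω => A s ω * M s ω with hfdef
  have hf_cont : ∀ ω, ContinuousOn (fun s => f s ω) (Icc 0 T) :=
    fun ω => (hA_cont ω).mul (hM_cont ω)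
  have hA_meas : ∀ u, Measurable[ℱ u] (A u) := fun u => (IsStronglyProgressive.stronglyAdapted hA_prog u).measurable
  have hM_meas : ∀ u, Measurable[ℱ u] (M u) := fun u => hM_adapted u
  have hf_meas : ∀ u, Measurable[ℱ u] (f u) := fun u => (hA_meas u).mul (hM_meas u)
  have hf_meas0 : ∀ u, Measurable[m0] (f u) := fun u => (hf_meas u).mono (ℱ.le u) le_rfl
  have hM_meas0 : ∀ u, Measurable[m0] (M u) := fun u => (hM_meas u).mono (ℱ.le u) le_rfl
  -- K : the control process
  set K : ℝ → Ω → ℝ := fun u ω => A u ω + |M u ω| with hKdef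
  have hK_cont : ∀ ω, ContinuousOn (fun u => K u ω) (Icc 0 T) :=
    fun ω => (hA_cont ω).add ((hM_cont ω).abs)
  have hK_meas : ∀ u, Measurable[ℱ u] (K u) := fun u => (hA_meas u).add (measurable_abs.comp (hM_meas u))
  have hK_meas0 : ∀ u, Measurable[m0] (K u) := fun u => (hK_meas u).mono (ℱ.le u) le_rfl
  -- pathwise running integral
  set Y : ℝ → Ω → ℝ := fun t ω => ∫ u in (0:ℝ)..t, f u ω with hYdef
  -- jointly measurable version of Y
  set Yj : Ω × ℝ → ℝ := fun p =>
    ∫ u in Icc (0:ℝ) T, (if u ≤ p.2 then f (clampf T (min u p.2)) p.1 else 0) with hYjdef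
  -- region indicator (jointly measurable version)
  set gp : ℕ → ℝ → Ω → Prop := fun n s ω =>
    (∀ q : ℚ, 0 ≤ (q:ℝ) → (q:ℝ) ≤ s → K q ω ≤ n) ∧ K (clampf T s) ω ≤ n ∧ K 0 ω ≤ n with hgpdef
  set w : ℕ → ℝ → Ω → ℝ := fun n s ω => if gp n s ω then 1 else 0 with hwdef
  -- the (jointly measurable) full integrand without M T factor
  set X : ℕ → ℝ → Ω → ℝ := fun n s ω =>
    w n s ω * ((1 + (Yj (ω, s))^2)⁻¹ * f (clampf T s) ω) with hXdef
  -- region characterization on good paths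
  have hgp_char : ∀ (n : ℕ) (ω), ∀ s ∈ Icc (0:ℝ) T,
      (gp n s ω ↔ ∀ u ∈ Icc (0:ℝ) s, K u ω ≤ n) := by
    intro n ω s hs
    constructor
    · rintro ⟨hq, hcl, h0⟩ u hu
      rcases eq_or_lt_of_le hu.2 with rfl | hus
      · rwa [clampf_eq_self hs] at hcl
      · by_contra hlt
        push_neg at hlt
        have huT : u ∈ Icc (0:ℝ) T := ⟨hu.1, le_trans (le_of_lt hus) hs.2⟩
        have hev : ∀ᶠ v in 𝓝[Icc (0:ℝ) T] u, (n:ℝ) < K v ω :=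
          (hK_cont ω u huT).eventually (eventually_gt_nhds hlt)
        rw [eventually_nhdsWithin_iff] at hev
        rcases Metric.eventually_nhds_iff.mp hev with ⟨δ, hδ, hball⟩
        have humin : u < min (u + δ) s := lt_min (by linarith) hus
        rcases exists_rat_btwn humin with ⟨q, hq1, hq2⟩
        have hq0 : (0:ℝ) ≤ (q:ℝ) := le_trans hu.1 (le_of_lt hq1)
        have hqs : (q:ℝ) ≤ s := le_of_lt (lt_of_lt_of_le hq2 (min_le_right _ _))
        have hqT : (q:ℝ) ∈ Icc (0:ℝ) T := ⟨hq0, le_trans hqs hs.2⟩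
        have hd : dist (q:ℝ) u < δ := by
          rw [Real.dist_eq, abs_of_pos (by linarith)]
          have := lt_of_lt_of_le hq2 (min_le_left _ _)
          linarith
        exact absurd (hq q hq0 hqs) (not_le.mpr (hball hd hqT))
    · intro h
      rw [hgpdef]
      refine ⟨fun q hq0 hqs => h _ ⟨hq0, hqs⟩, ?_, h 0 ⟨le_rfl, hs.1⟩⟩
      rw [clampf_eq_self hs]
      exact h s ⟨hs.1, le_rfl⟩
  -- gp is monotone in n and antitone in s
  have hgp_mono : ∀ (n m : ℕ) (s : ℝ) (ω), n ≤ m → gp n s ω → gp m s ω := by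
    intro n m s ω hnm ⟨h1, h2, h3⟩
    have hc : ((n:ℝ)) ≤ (m:ℝ) := Nat.cast_le.mpr hnm
    exact ⟨fun q hq0 hqs => le_trans (h1 q hq0 hqs) hc, le_trans h2 hc, le_trans h3 hc⟩
  -- w bounds f
  have hw_bound : ∀ (n : ℕ) (s : ℝ) (ω), w n s ω = 1 → |f (clampf T s) ω| ≤ (n:ℝ)^2 := by
    intro n s ω hw1
    have hgp1 : gp n s ω := by
      by_contra hgp'
      rw [hwdef] at hw1
      simp only [hgp', if_false] at hw1
      exact zero_ne_one hw1
    have hclT : clampf T s ∈ Icc (0:ℝ) T := clampf_mem_Icc hT0 s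
    have hApos : 0 < A (clampf T s) ω := hA_pos ω _ hclT
    have hK1 : K (clampf T s) ω ≤ n := hgp1.2.1
    have hAle : A (clampf T s) ω ≤ n := by
      have : (0:ℝ) ≤ |M (clampf T s) ω| := abs_nonneg _
      rw [hKdef] at hK1; dsimp at hK1; linarith
    have hMle : |M (clampf T s) ω| ≤ n := by
      rw [hKdef] at hK1; dsimp at hK1; linarith
    have : |f (clampf T s) ω| = A (clampf T s) ω * |M (clampf T s) ω| := by
      rw [hfdef]; dsimp; rw [abs_mul, abs_of_pos hApos]
    rw [this, sq]
    exact mul_le_mul hAle hMle (abs_nonneg _) (Nat.cast_nonneg n)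
  -- X is bounded
  have hφ_bound : ∀ y : ℝ, |(1 + y^2)⁻¹| ≤ 1 := by
    intro y
    rw [abs_of_pos (by positivity)]
    rw [inv_le_one_iff₀]
    right; nlinarith [sq_nonneg y]
  have hX_bound : ∀ (n : ℕ) (s : ℝ) (ω), |X n s ω| ≤ (n:ℝ)^2 := by
    intro n s ω
    rw [hXdef]; dsimp only
    by_cases hgp1 : gp n s ω
    · have hw1 : w n s ω = 1 := by rw [hwdef]; dsimp only; exact if_pos hgp1
      rw [hw1, one_mul, abs_mul]
      calc |(1 + Yj (ω, s) ^ 2)⁻¹| * |f (clampf T s) ω|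
          ≤ 1 * |f (clampf T s) ω| :=
            mul_le_mul_of_nonneg_right (hφ_bound _) (abs_nonneg _)
        _ = |f (clampf T s) ω| := one_mul _
        _ ≤ (n:ℝ)^2 := hw_bound n s ω hw1
    · have hw0 : w n s ω = 0 := by rw [hwdef]; dsimp only; exact if_neg hgp1
      rw [hw0, zero_mul, abs_zero]
      positivity
  -- Yj agrees with Y on Icc
  have hYj_eq : ∀ (ω), ∀ s ∈ Icc (0:ℝ) T, Yj (ω, s) = Y s ω := by
    intro ω s hs
    rw [hYjdef, hYdef]
    dsimp only
    have h1 : ∀ u ∈ Icc (0:ℝ) T,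
        (if u ≤ s then f (clampf T (min u s)) ω else 0) = (Iic s).indicator (fun u => f u ω) u := by
      intro u hu
      by_cases hus : u ≤ s
      · have : min u s = u := min_eq_left hus
        rw [if_pos hus, this, clampf_eq_self hu, indicator_of_mem (mem_Iic.mpr hus)]
      · rw [if_neg hus, indicator_of_notMem (by simpa [mem_Iic] using hus)]
    rw [setIntegral_congr_fun measurableSet_Icc h1]
    rw [setIntegral_indicator measurableSet_Iic]
    have h2 : Icc (0:ℝ) T ∩ Iic s = Icc (0:ℝ) s := by
      ext u
      simp only [mem_inter_iff, mem_Icc, mem_Iic]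
      constructor
      · rintro ⟨⟨h0, _⟩, hsu⟩; exact ⟨h0, hsu⟩
      · rintro ⟨h0, hsu⟩; exact ⟨⟨h0, le_trans hsu hs.2⟩, hsu⟩
    rw [h2, integral_Icc_eq_integral_Ioc, intervalIntegral.integral_of_le hs.1]
  -- measurability of Yj with respect to ℱ s
  have hcl_min : ∀ s ∈ Icc (0:ℝ) T, ∀ u : ℝ, clampf T (min u s) = clampf s u := by
    intro s hs u
    unfold clampf
    rw [min_eq_left (le_trans (min_le_right u s) hs.2)]
  have hYj_meas : ∀ s ∈ Icc (0:ℝ) T, Measurable[ℱ s] fun ω => Yj (ω, s) := by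
    intro s hs
    letI : MeasurableSpace Ω := ℱ s
    have hmeas' : ∀ u ∈ Icc (0:ℝ) s, Measurable (f u) :=
      fun u hu => (hf_meas u).mono (ℱ.mono hu.2) le_rfl
    have h1 : Measurable fun p : ℝ × Ω => f (clampf s p.1) p.2 :=
      joint_meas_clamp hs.1 hs.2 f hf_cont hmeas'
    set g : Ω × ℝ → ℝ := fun q => if q.2 ≤ s then f (clampf s q.2) q.1 else 0 with hgdef
    have hg : Measurable g := by
      refine Measurable.ite ?_ (h1.comp measurable_swap) measurable_const
      exact measurable_snd measurableSet_Iic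
    have h2 : StronglyMeasurable fun ω => ∫ u in Icc (0:ℝ) T, g (ω, u) :=
      hg.stronglyMeasurable.integral_prod_right'
    have h3 : (fun ω => Yj (ω, s)) = fun ω => ∫ u in Icc (0:ℝ) T, g (ω, u) := by
      funext ω
      rw [hYjdef]
      dsimp only
      refine integral_congr_ae (ae_of_all _ fun u => ?_)
      rw [hgdef]
      dsimp only
      rw [hcl_min s hs u]
    rw [h3]
    exact h2.measurable
  -- joint measurability of Yj on Ω × ℝ (with m0)
  have hclT_meas : Measurable fun p : ℝ × Ω => f (clampf T p.1) p.2 :=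
    joint_meas_clamp hT0 le_rfl f hf_cont (fun u _ => hf_meas0 u)
  have hYj_measJ : Measurable Yj := by
    set G : (Ω × ℝ) × ℝ → ℝ :=
      fun q => if q.2 ≤ q.1.2 then f (clampf T (min q.2 q.1.2)) q.1.1 else 0 with hGdef
    have hG : Measurable G := by
      refine Measurable.ite ?_ ?_ measurable_const
      · exact measurableSet_le measurable_snd (measurable_fst.snd)
      · exact hclT_meas.comp ((measurable_snd.min measurable_fst.snd).prodMk measurable_fst.fst)
    have h2 : StronglyMeasurable fun p : Ω × ℝ => ∫ u in Icc (0:ℝ) T, G (p, u) :=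
      hG.stronglyMeasurable.integral_prod_right'
    have h3 : Yj = fun p : Ω × ℝ => ∫ u in Icc (0:ℝ) T, G (p, u) := by
      rw [hYjdef]
    rw [h3]
    exact h2.measurable

  -- ============ measurability of the region indicator ============
  have hgpset_meas : ∀ (n : ℕ), ∀ s ∈ Icc (0:ℝ) T, MeasurableSet[ℱ s] {ω | gp n s ω} := by
    intro n s hs
    have hset : {ω | gp n s ω} =
        (⋂ q : ℚ, {ω | 0 ≤ (q:ℝ) → (q:ℝ) ≤ s → K q ω ≤ n}) ∩
          ({ω | K (clampf T s) ω ≤ n} ∩ {ω | K 0 ω ≤ n}) := by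
      ext ω
      simp only [hgpdef, mem_setOf_eq, mem_inter_iff, mem_iInter]
    rw [hset]
    refine MeasurableSet.inter (MeasurableSet.iInter fun q => ?_) (MeasurableSet.inter ?_ ?_)
    · by_cases hq : 0 ≤ (q:ℝ) ∧ (q:ℝ) ≤ s
      · have heq : {ω | 0 ≤ (q:ℝ) → (q:ℝ) ≤ s → K q ω ≤ n} = {ω | K q ω ≤ n} := by
          ext ω; simp only [mem_setOf_eq]; tauto
        rw [heq]
        exact ((hK_meas q).mono (ℱ.mono hq.2) le_rfl) measurableSet_Iic
      · have heq : {ω | 0 ≤ (q:ℝ) → (q:ℝ) ≤ s → K q ω ≤ n} = univ := by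
          ext ω; simp only [mem_setOf_eq, mem_univ, iff_true]; tauto
        rw [heq]; exact MeasurableSet.univ
    · rw [clampf_eq_self hs]
      exact (hK_meas s) measurableSet_Iic
    · exact ((hK_meas 0).mono (ℱ.mono hs.1) le_rfl) measurableSet_Iic
  have hφ_cont : Continuous fun y : ℝ => (1 + y ^ 2)⁻¹ := by
    refine Continuous.inv₀ (continuous_const.add (continuous_pow 2)) ?_
    intro y; positivity
  have hX_meas : ∀ (n : ℕ), ∀ s ∈ Icc (0:ℝ) T, Measurable[ℱ s] fun ω => X n s ω := by
    intro n s hs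
    rw [hXdef]
    have h1 : Measurable[ℱ s] fun ω => w n s ω := by
      rw [hwdef]
      exact Measurable.ite (hgpset_meas n s hs) measurable_const measurable_const
    have h2 : Measurable[ℱ s] fun ω => (1 + Yj (ω, s) ^ 2)⁻¹ :=
      hφ_cont.measurable.comp (hYj_meas s hs)
    have h3 : Measurable[ℱ s] fun ω => f (clampf T s) ω := by
      rw [clampf_eq_self hs]; exact hf_meas s
    exact h1.mul (h2.mul h3)
  have hXJ_meas : ∀ n : ℕ, Measurable fun p : Ω × ℝ => X n p.2 p.1 := by
    intro n
    rw [hXdef]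
    have h1 : Measurable fun p : Ω × ℝ => w n p.2 p.1 := by
      rw [hwdef]
      refine Measurable.ite ?_ measurable_const measurable_const
      have hset : {p : Ω × ℝ | gp n p.2 p.1} =
          (⋂ q : ℚ, {p : Ω × ℝ | 0 ≤ (q:ℝ) → (q:ℝ) ≤ p.2 → K q p.1 ≤ n}) ∩
            ({p : Ω × ℝ | K (clampf T p.2) p.1 ≤ n} ∩ {p : Ω × ℝ | K 0 p.1 ≤ n}) := by
        ext p
        simp only [hgpdef, mem_setOf_eq, mem_inter_iff, mem_iInter]
      rw [hset]
      refine MeasurableSet.inter (MeasurableSet.iInter fun q => ?_) (MeasurableSet.inter ?_ ?_)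
      · by_cases hq0 : 0 ≤ (q:ℝ)
        · have heq : {p : Ω × ℝ | 0 ≤ (q:ℝ) → (q:ℝ) ≤ p.2 → K q p.1 ≤ n} =
              {p : Ω × ℝ | (q:ℝ) ≤ p.2}ᶜ ∪ {p : Ω × ℝ | K q p.1 ≤ n} := by
            ext p; simp only [mem_setOf_eq, mem_union, mem_compl_iff]; tauto
          rw [heq]
          refine MeasurableSet.union ?_ ?_
          · exact (measurable_snd measurableSet_Ici).compl
          · exact ((hK_meas0 q).comp measurable_fst) measurableSet_Iic
        · have heq : {p : Ω × ℝ | 0 ≤ (q:ℝ) → (q:ℝ) ≤ p.2 → K q p.1 ≤ n} = univ := by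
            ext p; simp only [mem_setOf_eq, mem_univ, iff_true]; tauto
          rw [heq]; exact MeasurableSet.univ
      · have hKj : Measurable fun pr : ℝ × Ω => K (clampf T pr.1) pr.2 :=
          joint_meas_clamp hT0 le_rfl K hK_cont (fun u _ => hK_meas0 u)
        exact (hKj.comp measurable_swap) measurableSet_Iic
      · exact ((hK_meas0 0).comp measurable_fst) measurableSet_Iic
    have h2 : Measurable fun p : Ω × ℝ => (1 + Yj p ^ 2)⁻¹ :=
      hφ_cont.measurable.comp hYj_measJ
    have h3 : Measurable fun p : Ω × ℝ => f (clampf T p.2) p.1 :=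
      hclT_meas.comp measurable_swap
    exact h1.mul (h2.mul h3)
  -- ============ pathwise FTC ============
  have hY0 : ∀ ω, Y 0 ω = 0 := fun ω => by rw [hYdef]; exact intervalIntegral.integral_same
  have hY_cont : ∀ ω, ContinuousOn (fun t => Y t ω) (Icc 0 T) := by
    intro ω
    have hint : IntegrableOn (fun u => f u ω) (uIcc 0 T) volume := by
      rw [uIcc_of_le hT0]
      exact (hf_cont ω).integrableOn_Icc
    have h1 := intervalIntegral.continuousOn_primitive_interval hint
    rw [uIcc_of_le hT0] at h1
    exact h1
  have hFTC : ∀ ω, ∀ c ∈ Icc (0:ℝ) T,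
      ∫ s in (0:ℝ)..c, (1 + (Y s ω)^2)⁻¹ * f s ω = Real.arctan (Y c ω) := by
    intro ω c hc
    have key : (∫ s in (0:ℝ)..c, (1 + (Y s ω)^2)⁻¹ * f s ω) =
        Real.arctan (Y c ω) - Real.arctan (Y 0 ω) := by
      refine intervalIntegral.integral_eq_sub_of_hasDeriv_right_of_le
        (f := fun t => Real.arctan (Y t ω)) (f' := fun s => (1 + (Y s ω)^2)⁻¹ * f s ω)
        hc.1 ?_ ?_ ?_
      · exact Real.continuous_arctan.comp_continuousOn
          ((hY_cont ω).mono (Icc_subset_Icc le_rfl hc.2))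
      · intro x hx
        have hx0 : 0 < x := hx.1
        have hxT : x < T := lt_of_lt_of_le hx.2 hc.2
        have hnbhd : Icc (0:ℝ) T ∈ 𝓝 x := Icc_mem_nhds hx0 hxT
        have hci : IntervalIntegrable (fun u => f u ω) volume 0 x := by
          refine ContinuousOn.intervalIntegrable ?_
          rw [uIcc_of_le (le_of_lt hx0)]
          exact (hf_cont ω).mono (Icc_subset_Icc le_rfl (le_of_lt (lt_of_lt_of_le hxT le_rfl)))
        have hd : HasDerivAt (fun t => Y t ω) (f x ω) x := by
          rw [hYdef]
          exact intervalIntegral.integral_hasDerivAt_right hci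
            ⟨Icc (0:ℝ) T, hnbhd, ((hf_cont ω).aestronglyMeasurable measurableSet_Icc)⟩
            ((hf_cont ω).continuousAt hnbhd)
        exact ((Real.hasDerivAt_arctan' (Y x ω)).comp x hd).hasDerivWithinAt
      · refine ContinuousOn.intervalIntegrable ?_
        rw [uIcc_of_le hc.1]
        have h1 : ContinuousOn (fun s => (1 + (Y s ω)^2)⁻¹) (Icc 0 c) :=
          hφ_cont.comp_continuousOn ((hY_cont ω).mono (Icc_subset_Icc le_rfl hc.2))
        exact h1.mul ((hf_cont ω).mono (Icc_subset_Icc le_rfl hc.2))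
    rw [key, hY0 ω, Real.arctan_zero, sub_zero]
  -- ============ terminal value of the region ============
  set E : ℕ → Ω → Set ℝ := fun n ω => {s | s ∈ Icc (0:ℝ) T ∧ ∀ u ∈ Icc (0:ℝ) s, K u ω ≤ n}
    with hEdef
  set cval : ℕ → Ω → ℝ := fun n ω => if K 0 ω ≤ (n:ℝ) then sSup (E n ω) else 0 with hcvaldef
  -- pathwise value of the integral
  have hpath : ∀ (n : ℕ) (ω), (∫ s in Icc (0:ℝ) T, X n s ω) = Real.arctan (Y (cval n ω) ω) := by
    intro n ω
    by_cases hK0 : K 0 ω ≤ (n:ℝ)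
    · -- main case
      have h0mem : (0:ℝ) ∈ E n ω := by
        rw [hEdef]
        refine ⟨⟨le_rfl, hT0⟩, fun u hu => ?_⟩
        have hu0 : u = 0 := le_antisymm hu.2 hu.1
        rw [hu0]; exact hK0
      have hbdd : BddAbove (E n ω) :=
        BddAbove.mono (fun e he => he.1) bddAbove_Icc
      have hne : (E n ω).Nonempty := ⟨0, h0mem⟩
      have hc0 : 0 ≤ sSup (E n ω) := le_csSup hbdd h0mem
      have hcT : sSup (E n ω) ≤ T := csSup_le hne (fun e he => he.1.2)
      have hKlt : ∀ v, 0 ≤ v → v < sSup (E n ω) → K v ω ≤ n := by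
        intro v hv0 hvc
        rcases exists_lt_of_lt_csSup hne hvc with ⟨e, heE, hve⟩
        exact heE.2 v ⟨hv0, le_of_lt hve⟩
      have hKc : ∀ u ∈ Icc (0:ℝ) (sSup (E n ω)), K u ω ≤ n := by
        intro u hu
        rcases lt_or_eq_of_le hu.2 with hlt | hequ
        · exact hKlt u hu.1 hlt
        · rcases eq_or_lt_of_le hu.1 with h0u | h0u
          · rw [← h0u]; exact hK0
          · by_contra hgt
            push_neg at hgt
            have huT : u ∈ Icc (0:ℝ) T := ⟨hu.1, le_trans (le_of_eq hequ) hcT⟩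
            have hev := (hK_cont ω u huT).eventually (eventually_gt_nhds hgt)
            rw [eventually_nhdsWithin_iff] at hev
            rcases Metric.eventually_nhds_iff.mp hev with ⟨δ, hδ, hball⟩
            have hv0 : 0 ≤ max (u - δ/2) 0 := le_max_right _ _
            have hvu : max (u - δ/2) 0 < u := max_lt (by linarith) h0u
            have hdist : dist (max (u - δ/2) 0) u < δ := by
              rw [Real.dist_eq, abs_of_nonpos (by linarith [le_max_left (u - δ/2) (0:ℝ)] : max (u - δ/2) 0 - u ≤ 0)]
              have h1 : u - δ/2 ≤ max (u - δ/2) 0 := le_max_left _ _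
              linarith
            have hvT : max (u - δ/2) 0 ∈ Icc (0:ℝ) T := ⟨hv0, le_trans (le_of_lt hvu) huT.2⟩
            have hgt2 := hball hdist hvT
            have hle2 := hKlt _ hv0 (lt_of_lt_of_le hvu (le_of_eq hequ))
            linarith
      have hceq : cval n ω = sSup (E n ω) := by
        rw [hcvaldef]; dsimp only; rw [if_pos hK0]
      have hreg : EqOn (fun s => X n s ω)
          ((Iic (sSup (E n ω))).indicator fun s => (1 + (Y s ω)^2)⁻¹ * f s ω) (Icc (0:ℝ) T) := by
        intro s hs
        by_cases hsc : s ≤ sSup (E n ω)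
        · have hgp1 : gp n s ω := (hgp_char n ω s hs).mpr
            (fun u hu => hKc u ⟨hu.1, le_trans hu.2 hsc⟩)
          rw [hXdef]; dsimp only; rw [hwdef]; dsimp only
          rw [if_pos hgp1, one_mul, indicator_of_mem (mem_Iic.mpr hsc)]
          rw [clampf_eq_self hs, hYj_eq ω s hs]
        · have hgp1 : ¬ gp n s ω := by
            intro hgp1
            exact hsc (le_csSup hbdd ⟨hs, (hgp_char n ω s hs).mp hgp1⟩)
          rw [hXdef]; dsimp only; rw [hwdef]; dsimp only
          rw [if_neg hgp1, zero_mul, indicator_of_notMem (by simpa [mem_Iic] using hsc)]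
      rw [setIntegral_congr_fun measurableSet_Icc hreg]
      rw [setIntegral_indicator measurableSet_Iic]
      have h2 : Icc (0:ℝ) T ∩ Iic (sSup (E n ω)) = Icc (0:ℝ) (sSup (E n ω)) := by
        ext u
        simp only [mem_inter_iff, mem_Icc, mem_Iic]
        constructor
        · rintro ⟨⟨h0, _⟩, hsu⟩; exact ⟨h0, hsu⟩
        · rintro ⟨h0, hsu⟩; exact ⟨⟨h0, le_trans hsu hcT⟩, hsu⟩
      rw [h2, integral_Icc_eq_integral_Ioc, ← intervalIntegral.integral_of_le hc0]
      rw [hceq]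
      exact hFTC ω (sSup (E n ω)) ⟨hc0, hcT⟩
    · -- degenerate case
      have hw0 : ∀ s, X n s ω = 0 := by
        intro s
        have hgp0 : ¬ gp n s ω := fun hgp1 => hK0 hgp1.2.2
        rw [hXdef]; dsimp only; rw [hwdef]; dsimp only; rw [if_neg hgp0, zero_mul]
      have hc0 : cval n ω = 0 := by rw [hcvaldef]; dsimp only; rw [if_neg hK0]
      rw [hc0, hY0 ω, Real.arctan_zero]
      simp only [hw0, integral_zero]
  set Gf : ℕ → Ω → ℝ := fun n ω => ∫ s in Icc (0:ℝ) T, X n s ω with hGfdef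
  have hGf_bound : ∀ n ω, |Gf n ω| ≤ Real.pi / 2 := by
    intro n ω
    rw [hGfdef]; dsimp only; rw [hpath n ω]
    rw [abs_le]
    constructor
    · exact le_of_lt (Real.neg_pi_div_two_lt_arctan _)
    · exact le_of_lt (Real.arctan_lt_pi_div_two _)
  have hcval_event : ∀ ω, ∀ᶠ n in atTop, cval n ω = T := by
    intro ω
    rcases (isCompact_Icc).exists_bound_of_continuousOn (hK_cont ω) with ⟨C, hC⟩
    rcases exists_nat_ge C with ⟨N, hN⟩
    rw [eventually_atTop]
    refine ⟨N, fun n hn => ?_⟩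
    have hball : ∀ u ∈ Icc (0:ℝ) T, K u ω ≤ n := by
      intro u hu
      calc K u ω ≤ |K u ω| := le_abs_self _
        _ ≤ C := by have := hC u hu; rwa [Real.norm_eq_abs] at this
        _ ≤ N := hN
        _ ≤ n := Nat.cast_le.mpr hn
    have hK0 : K 0 ω ≤ (n:ℝ) := hball 0 ⟨le_rfl, hT0⟩
    have hET : E n ω = Icc (0:ℝ) T := by
      rw [hEdef]
      ext s
      simp only [mem_setOf_eq]
      constructor
      · exact fun h => h.1
      · intro hs; exact ⟨hs, fun u hu => hball u ⟨hu.1, le_trans hu.2 hs.2⟩⟩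
    rw [hcvaldef]; dsimp only; rw [if_pos hK0, hET, csSup_Icc hT0]
  have hGf_tendsto : ∀ ω, Tendsto (fun n => Gf n ω) atTop (𝓝 (Real.arctan (Y T ω))) := by
    intro ω
    have hee : (fun _ : ℕ => Real.arctan (Y T ω)) =ᶠ[atTop] fun n => Gf n ω := by
      filter_upwards [hcval_event ω] with n hn
      rw [hGfdef]; dsimp only; rw [hpath n ω, hn]
    exact tendsto_const_nhds.congr' hee
  have hGf_meas : ∀ n, Measurable (Gf n) := by
    intro n
    have h1 : StronglyMeasurable fun ω => ∫ s in Icc (0:ℝ) T, X n s ω :=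
      ((hXJ_meas n).stronglyMeasurable).integral_prod_right'
    rw [hGfdef]
    exact h1.measurable
  -- ============ the product integrand ============
  set FF : ℕ → Ω × ℝ → ℝ := fun n p => M T p.1 * X n p.2 p.1 with hFFdef
  have hMT_int : Integrable (M T) μ := hM_int T ⟨hT0, le_rfl⟩
  have hFF_meas : ∀ n, Measurable (FF n) := fun n =>
    ((hM_meas0 T).comp measurable_fst).mul (hXJ_meas n)
  have hFF_bound : ∀ (n : ℕ) (p : Ω × ℝ), ‖FF n p‖ ≤ |M T p.1| * (n:ℝ)^2 := by
    intro n p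
    rw [hFFdef]; dsimp only
    rw [Real.norm_eq_abs, abs_mul]
    exact mul_le_mul_of_nonneg_left (hX_bound n p.2 p.1) (abs_nonneg _)
  have hFF_int : ∀ n, Integrable (FF n) (μ.prod ν) := by
    intro n
    refine (integrable_prod_iff (hFF_meas n).aestronglyMeasurable).mpr ⟨?_, ?_⟩
    · refine ae_of_all _ fun ω => ?_
      refine Integrable.mono' (integrable_const (|M T ω| * (n:ℝ)^2)) ?_ ?_
      · exact ((hFF_meas n).comp measurable_prodMk_left).aestronglyMeasurable
      · exact ae_of_all _ fun s => hFF_bound n (ω, s)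
    · refine Integrable.mono' (g := fun ω => (ν univ).toReal * (|M T ω| * (n:ℝ)^2))
        ((hMT_int.abs.mul_const _).const_mul _) ?_ ?_
      · exact (((hFF_meas n).stronglyMeasurable.norm).integral_prod_right').aestronglyMeasurable
      · refine ae_of_all _ fun ω => ?_
        have h2 : (0:ℝ) ≤ ∫ s, ‖FF n (ω, s)‖ ∂ν := integral_nonneg fun s => norm_nonneg _
        rw [Real.norm_eq_abs, abs_of_nonneg h2]
        calc (∫ s, ‖FF n (ω, s)‖ ∂ν) ≤ ∫ _, |M T ω| * (n:ℝ)^2 ∂ν :=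
              integral_mono_of_nonneg (ae_of_all _ fun s => norm_nonneg _)
                (integrable_const _) (ae_of_all _ fun s => hFF_bound n (ω, s))
          _ = (ν univ).toReal * (|M T ω| * (n:ℝ)^2) := by
              rw [integral_const, smul_eq_mul]; rfl
  have hswap : ∀ n, (∫ ω, (∫ s, FF n (ω, s) ∂ν) ∂μ) = ∫ s, (∫ ω, FF n (ω, s) ∂μ) ∂ν :=
    fun n => integral_integral_swap (hFF_int n)
  have hinner : ∀ n ω, (∫ s, FF n (ω, s) ∂ν) = M T ω * Gf n ω := by
    intro n ω
    rw [hGfdef, hFFdef]; dsimp only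
    exact integral_const_mul _ _
  -- ============ the tower property ============
  have hXa : ∀ (n : ℕ), ∀ s ∈ Icc (0:ℝ) T, AEStronglyMeasurable (fun ω => X n s ω) μ :=
    fun n s hs => (((hX_meas n s hs).mono (ℱ.le s) le_rfl).stronglyMeasurable).aestronglyMeasurable
  have htower : ∀ (n : ℕ), ∀ s ∈ Icc (0:ℝ) T,
      (∫ ω, FF n (ω, s) ∂μ) = ∫ ω, X n s ω * M s ω ∂μ := by
    intro n s hs
    haveI hfin : IsFiniteMeasure (μ.trim (ℱ.le s)) := by
      constructor
      rw [trim_measurableSet_eq (ℱ.le s) MeasurableSet.univ]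
      exact measure_lt_top μ univ
    have hXsm : StronglyMeasurable[ℱ s] (fun ω => X n s ω) := (hX_meas n s hs).stronglyMeasurable
    have hprod_int : Integrable ((fun ω => X n s ω) * M T) μ := by
      refine hMT_int.bdd_mul (c := (n:ℝ)^2) (hXa n s hs) ?_
      exact ae_of_all _ fun ω => by rw [Real.norm_eq_abs]; exact hX_bound n s ω
    have h1 : μ[(fun ω => X n s ω) * M T | ℱ s] =ᵐ[μ] (fun ω => X n s ω) * μ[M T | ℱ s] :=
      condExp_mul_of_stronglyMeasurable_left hXsm hprod_int hMT_int
    have h2 : ∫ ω, ((fun ω => X n s ω) * M T) ω ∂μ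
        = ∫ ω, ((fun ω => X n s ω) * μ[M T | ℱ s]) ω ∂μ := by
      rw [← integral_condExp (ℱ.le s) (f := (fun ω => X n s ω) * M T)]
      exact integral_congr_ae h1
    have h3 : ∫ ω, ((fun ω => X n s ω) * μ[M T | ℱ s]) ω ∂μ = ∫ ω, X n s ω * M s ω ∂μ := by
      refine integral_congr_ae ?_
      filter_upwards [hM_mart s T hs.1 hs.2 le_rfl] with ω hω
      rw [Pi.mul_apply, hω]
    calc ∫ ω, FF n (ω, s) ∂μ = ∫ ω, ((fun ω => X n s ω) * M T) ω ∂μ := by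
          refine integral_congr_ae (ae_of_all _ fun ω => ?_)
          rw [hFFdef]; dsimp only; rw [Pi.mul_apply]; ring
      _ = _ := h2.trans h3
  -- ============ positivity, monotonicity, integrability ============
  have hXM_nonneg : ∀ (n : ℕ), ∀ s ∈ Icc (0:ℝ) T, ∀ ω, 0 ≤ X n s ω * M s ω := by
    intro n s hs ω
    have hval : X n s ω * M s ω
        = w n s ω * ((1 + Yj (ω,s)^2)⁻¹ * A s ω) * (M s ω)^2 := by
      rw [hXdef]; dsimp only; rw [clampf_eq_self hs, hfdef]; dsimp only; ring
    rw [hval]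
    have h1 : 0 ≤ w n s ω := by
      rw [hwdef]; dsimp only
      split
      · norm_num
      · norm_num
    have h3 : 0 ≤ A s ω := le_of_lt (hA_pos ω s hs)
    have h2 : (0:ℝ) ≤ (1 + Yj (ω,s)^2)⁻¹ := by positivity
    positivity
  have hXM_mono : ∀ (n m : ℕ), n ≤ m → ∀ s ∈ Icc (0:ℝ) T, ∀ ω,
      X n s ω * M s ω ≤ X m s ω * M s ω := by
    intro n m hnm s hs ω
    by_cases hgp1 : gp n s ω
    · have hgp2 : gp m s ω := hgp_mono n m s ω hnm hgp1
      have hXeq : X n s ω = X m s ω := by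
        rw [hXdef]; dsimp only; rw [hwdef]; dsimp only; rw [if_pos hgp1, if_pos hgp2]
      rw [hXeq]
    · have hXeq : X n s ω = 0 := by
        rw [hXdef]; dsimp only; rw [hwdef]; dsimp only; rw [if_neg hgp1, zero_mul]
      rw [hXeq, zero_mul]
      exact hXM_nonneg m s hs ω
  have hXM_int : ∀ (n : ℕ), ∀ s ∈ Icc (0:ℝ) T, Integrable (fun ω => X n s ω * M s ω) μ := by
    intro n s hs
    refine (hM_int s hs).bdd_mul (c := (n:ℝ)^2) (hXa n s hs) ?_
    exact ae_of_all _ fun ω => by rw [Real.norm_eq_abs]; exact hX_bound n s ω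
  -- ============ the key identity ============
  set J : ℕ → ℝ := fun n => ∫ ω, M T ω * Gf n ω ∂μ with hJdef
  have hJeq : ∀ n, J n = ∫ s, (∫ ω, X n s ω * M s ω ∂μ) ∂ν := by
    intro n
    rw [hJdef]; dsimp only
    have h1 : ∫ ω, M T ω * Gf n ω ∂μ = ∫ ω, (∫ s, FF n (ω, s) ∂ν) ∂μ :=
      integral_congr_ae (ae_of_all _ fun ω => (hinner n ω).symm)
    rw [h1, hswap n]
    refine integral_congr_ae ?_
    filter_upwards [ae_restrict_mem measurableSet_Icc] with s hs
    exact htower n s hs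
  have hH_int : ∀ n, Integrable (fun s => ∫ ω, X n s ω * M s ω ∂μ) ν := by
    intro n
    have h1 : Integrable (fun s => ∫ ω, FF n (ω, s) ∂μ) ν := (hFF_int n).integral_prod_right
    refine h1.congr ?_
    filter_upwards [ae_restrict_mem measurableSet_Icc] with s hs
    exact htower n s hs
  have hJ_nonneg : ∀ n, 0 ≤ J n := by
    intro n
    rw [hJeq n]
    refine integral_nonneg_of_ae ?_
    filter_upwards [ae_restrict_mem measurableSet_Icc] with s hs
    exact integral_nonneg fun ω => hXM_nonneg n s hs ω
  have hJ_mono : ∀ n m, n ≤ m → J n ≤ J m := by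
    intro n m hnm
    rw [hJeq n, hJeq m]
    refine integral_mono_ae (hH_int n) (hH_int m) ?_
    filter_upwards [ae_restrict_mem measurableSet_Icc] with s hs
    exact integral_mono (hXM_int n s hs) (hXM_int m s hs) (fun ω => hXM_mono n m hnm s hs ω)
  have hJ_tendsto : Tendsto J atTop (𝓝 0) := by
    have hlim : ∫ ω, M T ω * Real.arctan (Y T ω) ∂μ = 0 := by
      have hzero : (fun ω => M T ω * Real.arctan (Y T ω)) =ᵐ[μ] fun _ => (0:ℝ) := by
        filter_upwards [h_zero] with ω hω
        have hYT : Y T ω = 0 := by rw [hYdef]; exact hω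
        rw [hYT, Real.arctan_zero, mul_zero]
      rw [integral_congr_ae hzero, integral_zero]
    rw [hJdef, ← hlim]
    refine tendsto_integral_of_dominated_convergence (fun ω => |M T ω| * (Real.pi / 2))
      ?_ ?_ ?_ ?_
    · intro n
      exact ((hM_meas0 T).mul (hGf_meas n)).aestronglyMeasurable
    · exact hMT_int.abs.mul_const _
    · intro n
      refine ae_of_all _ fun ω => ?_
      rw [Real.norm_eq_abs, abs_mul]
      exact mul_le_mul_of_nonneg_left (hGf_bound n ω) (abs_nonneg _)
    · exact ae_of_all _ fun ω => (hGf_tendsto ω).const_mul _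
  have hJ0 : ∀ n, J n = 0 := by
    intro n
    refine le_antisymm ?_ (hJ_nonneg n)
    refine ge_of_tendsto hJ_tendsto ?_
    rw [eventually_atTop]
    exact ⟨n, fun m hm => hJ_mono n m hm⟩
  -- ============ extraction of the conclusion ============
  have hext : ∀ n : ℕ, ∀ᵐ s ∂ν, ∀ᵐ ω ∂μ, X n s ω * M s ω = 0 := by
    intro n
    have h1 : ∫ s, (∫ ω, X n s ω * M s ω ∂μ) ∂ν = 0 := by rw [← hJeq n]; exact hJ0 n
    have h2 : (fun s => ∫ ω, X n s ω * M s ω ∂μ) =ᵐ[ν] 0 := by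
      refine (integral_eq_zero_iff_of_nonneg_ae ?_ (hH_int n)).mp h1
      filter_upwards [ae_restrict_mem measurableSet_Icc] with s hs
      exact integral_nonneg fun ω => hXM_nonneg n s hs ω
    filter_upwards [h2, ae_restrict_mem measurableSet_Icc] with s hs2 hsI
    have h3 : ∫ ω, X n s ω * M s ω ∂μ = 0 := hs2
    have h4 := (integral_eq_zero_iff_of_nonneg
      (fun ω => hXM_nonneg n s hsI ω) (hXM_int n s hsI)).mp h3
    filter_upwards [h4] with ω hω
    exact hω
  have hMs0 : ∀ᵐ s ∂ν, ∀ᵐ ω ∂μ, M s ω = 0 := by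
    have hall : ∀ᵐ s ∂ν, ∀ n : ℕ, ∀ᵐ ω ∂μ, X n s ω * M s ω = 0 := ae_all_iff.mpr hext
    filter_upwards [hall, ae_restrict_mem measurableSet_Icc] with s hs hsI
    have hall2 : ∀ᵐ ω ∂μ, ∀ n : ℕ, X n s ω * M s ω = 0 := ae_all_iff.mpr hs
    filter_upwards [hall2] with ω hω
    rcases (isCompact_Icc).exists_bound_of_continuousOn (hK_cont ω) with ⟨C, hC⟩
    rcases exists_nat_ge C with ⟨N, hN⟩
    have hgp1 : gp N s ω := by
      refine (hgp_char N ω s hsI).mpr fun u hu => ?_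
      have huT : u ∈ Icc (0:ℝ) T := ⟨hu.1, le_trans hu.2 hsI.2⟩
      calc K u ω ≤ |K u ω| := le_abs_self _
        _ ≤ C := by have := hC u huT; rwa [Real.norm_eq_abs] at this
        _ ≤ N := hN
    have hXval : X N s ω * M s ω = (1 + Yj (ω,s)^2)⁻¹ * (A s ω * (M s ω)^2) := by
      rw [hXdef]; dsimp only; rw [hwdef]; dsimp only
      rw [if_pos hgp1, clampf_eq_self hsI, hfdef]; dsimp only; ring
    have h0 := hω N
    rw [hXval] at h0
    have hφpos : (0:ℝ) < (1 + Yj (ω,s)^2)⁻¹ := by positivity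
    have hApos := hA_pos ω s hsI
    have h5 : A s ω * (M s ω)^2 = 0 := by
      rcases mul_eq_zero.mp h0 with h | h
      · exact absurd h (ne_of_gt hφpos)
      · exact h
    rcases mul_eq_zero.mp h5 with h | h
    · exact absurd h (ne_of_gt hApos)
    · exact (pow_eq_zero_iff (two_ne_zero)).mp h
  -- ============ swapping the order of a.e. quantifiers ============
  have hMJc_meas : Measurable fun p : ℝ × Ω => M (clampf T p.1) p.2 :=
    joint_meas_clamp hT0 le_rfl M hM_cont (fun u _ => hM_meas0 u)
  set NN : Set (ℝ × Ω) := {p | M (clampf T p.1) p.2 ≠ 0} with hNNdef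
  have hNN_meas : MeasurableSet NN :=
    hMJc_meas ((measurableSet_singleton (0:ℝ)).compl)
  have hNN_null : (ν.prod μ) NN = 0 := by
    rw [Measure.measure_prod_null hNN_meas]
    filter_upwards [hMs0, ae_restrict_mem measurableSet_Icc] with s hs hsI
    have hset : (Prod.mk s ⁻¹' NN) = {ω | ¬ (M s ω = 0)} := by
      ext ω
      simp only [hNNdef, mem_preimage, mem_setOf_eq, clampf_eq_self hsI]
    rw [hset]
    exact ae_iff.mp hs
  have hswapNN : (μ.prod ν) (Prod.swap ⁻¹' NN) = 0 := by
    have h1 : (ν.prod μ) NN = (μ.prod ν).map Prod.swap NN := by rw [Measure.prod_swap]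
    rw [Measure.map_apply measurable_swap hNN_meas] at h1
    rw [← h1]; exact hNN_null
  have hfinal0 : ∀ᵐ ω ∂μ, (ν (Prod.mk ω ⁻¹' (Prod.swap ⁻¹' NN))) = 0 :=
    (Measure.measure_prod_null (measurable_swap hNN_meas)).mp hswapNN
  -- ============ conclusion ============
  filter_upwards [hfinal0] with ω hω
  have hae : ∀ᵐ s ∂ν, M s ω = 0 := by
    have h1 : ∀ᵐ s ∂ν, ¬ ((s, ω) ∈ NN) := by
      rw [ae_iff]
      have hset : {s : ℝ | ¬ ¬ ((s, ω) ∈ NN)} = Prod.mk ω ⁻¹' (Prod.swap ⁻¹' NN) := by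
        ext s
        simp only [mem_setOf_eq, mem_preimage, Prod.swap_prod_mk, not_not]
      rw [hset]
      exact hω
    filter_upwards [h1, ae_restrict_mem measurableSet_Icc] with s hs hsI
    by_contra hne
    refine hs ?_
    rw [hNNdef]
    simp only [mem_setOf_eq, clampf_eq_self hsI]
    exact hne
  exact eq_zero_of_ae_zero_of_continuousOn hT (hM_cont ω) hae
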